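/- Let a_i = (A_i, b_i, C_i, η_i, J_i) and a_j = (A_j, b_j, C_j, η_j, J_j) be filtering elements over ℝⁿ such that C_i, J_i, C_j, J_j are symmetric positive semidefinite. Then I + C_i·J_j is invertible, so a_i ⊗ a_j is well defined, and the C-component and J-component of a_i ⊗ a_j are again symmetric positive semidefinite. -/

import Mathlib

open Matrix

/-- A filtering element over `ℝⁿ`: a 5-tuple `(A, b, C, η, J)` with `A, C, J` real `n × n`
matrices and `b, η ∈ ℝⁿ`. -/
structure FilteringElem (n : ℕ) where
  A : Matrix (Fin n) (Fin n) ℝ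
  b : Fin n → ℝ
  C : Matrix (Fin n) (Fin n) ℝ
  η : Fin n → ℝ
  J : Matrix (Fin n) (Fin n) ℝ

/-- The filtering operator `⊗` on filtering elements (well defined when `I + C_i J_j`
is invertible). -/
noncomputable def filterOp {n : ℕ} (x y : FilteringElem n) : FilteringElem n where
  A := y.A * (1 + x.C * y.J)⁻¹ * x.A
  b := (y.A * (1 + x.C * y.J)⁻¹) *ᵥ (x.b + x.C *ᵥ y.η) + y.b
  C := y.A * (1 + x.C * y.J)⁻¹ * x.C * y.Aᵀ + y.C
  η := (x.Aᵀ * (1 + y.J * x.C)⁻¹) *ᵥ (y.η - y.J *ᵥ x.b) + x.η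
  J := x.Aᵀ * (1 + y.J * x.C)⁻¹ * y.J * x.A + x.J

open scoped MatrixOrder in
lemma filter_core {n : ℕ} {C J : Matrix (Fin n) (Fin n) ℝ}
    (hC : C.PosSemidef) (hJ : J.PosSemidef) :
    IsUnit (1 + C * J) ∧ ((1 + C * J)⁻¹ * C).PosSemidef := by
  set S := CFC.sqrt C with hSdef
  have hSherm : Sᴴ = S := (CFC.sqrt_nonneg C).posSemidef.isHermitian
  have hSS : S * S = C := CFC.sqrt_mul_sqrt_self C hC.nonneg
  have hSJS : (S * J * S).PosSemidef := by
    have := hJ.mul_mul_conjTranspose_same S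
    rwa [hSherm] at this
  have hU : (1 + S * J * S).PosDef := Matrix.PosDef.add_posSemidef Matrix.PosDef.one hSJS
  have hUdet : IsUnit (1 + S * J * S).det :=
    (Matrix.isUnit_iff_isUnit_det _).mp hU.isUnit
  have hdet : (1 + C * J).det = (1 + S * J * S).det := by
    rw [← hSS, Matrix.mul_assoc, Matrix.det_one_add_mul_comm]
  have hUnit : IsUnit (1 + C * J) := by
    rw [Matrix.isUnit_iff_isUnit_det, hdet]
    exact hUdet
  refine ⟨hUnit, ?_⟩
  set U := 1 + S * J * S with hUdef
  have key : (1 + C * J) * (S * U⁻¹ * S) = C := by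
    have h1 : (1 + C * J) * S = S * U := by
      rw [← hSS, hUdef]
      noncomm_ring
    calc (1 + C * J) * (S * U⁻¹ * S) = ((1 + C * J) * S) * (U⁻¹ * S) := by
          noncomm_ring
      _ = S * (U * U⁻¹) * S := by rw [h1]; noncomm_ring
      _ = C := by rw [Matrix.mul_nonsing_inv _ hUdet, Matrix.mul_one, hSS]
  have hinv : (1 + C * J)⁻¹ * C = S * U⁻¹ * S := by
    calc (1 + C * J)⁻¹ * C = (1 + C * J)⁻¹ * ((1 + C * J) * (S * U⁻¹ * S)) := by rw [key]
      _ = S * U⁻¹ * S := by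
          rw [← Matrix.mul_assoc,
            Matrix.nonsing_inv_mul _ ((Matrix.isUnit_iff_isUnit_det _).mp hUnit),
            Matrix.one_mul]
  rw [hinv]
  have := hU.inv.posSemidef.mul_mul_conjTranspose_same S
  rwa [hSherm] at this

/-- If the `C`- and `J`-components of two filtering elements are symmetric positive
semidefinite, then `I + C_i J_j` is invertible (so `a_i ⊗ a_j` is well defined), and the
`C`- and `J`-components of `a_i ⊗ a_j` are again symmetric positive semidefinite. -/
theorem filterOp_wellDefined_and_psd (n : ℕ) (x y : FilteringElem n)
    (hCx : x.C.PosSemidef) (hJx : x.J.PosSemidef)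
    (hCy : y.C.PosSemidef) (hJy : y.J.PosSemidef) :
    IsUnit (1 + x.C * y.J) ∧
    (filterOp x y).C.PosSemidef ∧ (filterOp x y).J.PosSemidef := by
  obtain ⟨hu, hM⟩ := filter_core hCx hJy
  obtain ⟨-, hN⟩ := filter_core hJy hCx
  refine ⟨hu, ?_, ?_⟩
  · have h1 : (y.A * ((1 + x.C * y.J)⁻¹ * x.C) * y.Aᴴ).PosSemidef :=
      hM.mul_mul_conjTranspose_same y.A
    have h2 : y.Aᴴ = y.Aᵀ := by
      ext i j; simp [Matrix.conjTranspose_apply]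
    rw [h2, ← Matrix.mul_assoc] at h1
    exact h1.add hCy
  · have h1 : (x.Aᵀ * ((1 + y.J * x.C)⁻¹ * y.J) * x.Aᵀᴴ).PosSemidef :=
      hN.mul_mul_conjTranspose_same x.Aᵀ
    have h2 : x.Aᵀᴴ = x.A := by
      ext i j; simp [Matrix.conjTranspose_apply]
    rw [h2, ← Matrix.mul_assoc] at h1
    exact h1.add hJx
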